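/- Let d ≥ 1, μ ∈ (0, 1), λ > 0, c ∈ ℝ, C₁ ≥ 0, let P be a d×d real matrix with P² = P, let a : (0, ∞) → [0, ∞), and let Φ : {(t, s) : 0 ≤ s ≤ t} → (d×d real matrices) satisfy, for each t, that s ↦ Φ(t, s) is measurable and ‖Φ(t, s) − P‖ ≤ C₁·e^{−λ(t−s)} + a(t) for all 0 ≤ s ≤ t. Let 0 = T₀ < T₁ < ⋯ < T_K, let σ : [0, ∞) → ℝ^d be piecewise constant, equal to σ_k on (T_{k−1}, T_k) for k = 1, …, K and equal to a fixed vector σ̄ = σ_{K+1} on (T_K, ∞), with ‖σ_k‖₂ ≤ √d for all k. Define, for t > T_K, δ(t) = c·μ·∫_0^t s^{μ−1}·Φ(t, s)·σ(s) ds + c·∑_{k=1}^K Φ(t, T_k)·(σ_{k+1} − σ_k)·T_k^μ. Then there exists C > 0 such that for all t ≥ max(T_K, 1) + 1: ‖δ(t) − c·t^μ·P·σ̄‖₂ ≤ C·(t^{μ−1} + t^μ·a(t) + e^{−λ(t−T_K)}). -/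

import Mathlib

open MeasureTheory

private lemma aux_x_exp (lam x : ℝ) (hlam : 0 < lam) (_hx : 0 ≤ x) :
    x * Real.exp (-(lam * x)) ≤ 1 / lam := by
  have h := Real.add_one_le_exp (lam * x)
  have hpos : (0:ℝ) < Real.exp (lam * x) := Real.exp_pos _
  rw [Real.exp_neg, le_div_iff₀ hlam]
  have hinv : (Real.exp (lam * x))⁻¹ * Real.exp (lam * x) = 1 := inv_mul_cancel₀ hpos.ne'
  nlinarith [inv_pos.mpr hpos, mul_pos hlam (inv_pos.mpr hpos)]

private lemma aux_exp_integral (lam t a b : ℝ) (hlam : 0 < lam) (hb : b ≤ t) :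
    ∫ s in a..b, Real.exp (-(lam * (t - s))) ≤ 1 / lam := by
  have hderiv : ∀ x ∈ Set.uIcc a b, HasDerivAt (fun s => Real.exp (-(lam * (t - s))) / lam)
      (Real.exp (-(lam * (t - x)))) x := by
    intro x _
    have hfun : (fun s : ℝ => -(lam * (t - s))) = fun s => lam * s - lam * t := by funext s; ring
    have h1 : HasDerivAt (fun s : ℝ => -(lam * (t - s))) lam x := by
      rw [hfun]
      simpa using ((hasDerivAt_id x).const_mul lam).sub_const (lam * t)
    have h3 := (h1.exp).div_const lam
    rwa [mul_div_cancel_right₀ _ hlam.ne'] at h3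
  have hint : IntervalIntegrable (fun s => Real.exp (-(lam * (t - s)))) volume a b :=
    (Real.continuous_exp.comp (by continuity)).intervalIntegrable a b
  rw [intervalIntegral.integral_eq_sub_of_hasDerivAt hderiv hint]
  have e1 : Real.exp (-(lam * (t - b))) ≤ 1 := Real.exp_le_one_iff.mpr (by nlinarith)
  have e2 : (0:ℝ) < Real.exp (-(lam * (t - a))) := Real.exp_pos _
  rw [div_sub_div_same, div_le_div_iff₀ hlam hlam]
  nlinarith

private lemma aux_telescope {M : Type*} [AddCommGroup M] [Module ℝ M] (K : ℕ) (b : ℕ → ℝ)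
    (v : ℕ → M) (hb0 : b 0 = 0) :
    (∑ i ∈ Finset.range (K+1), (b (i+1) - b i) • v (i+1))
      + ∑ k ∈ Finset.Icc 1 K, b k • (v (k+1) - v k) = b (K+1) • v (K+1) := by
  have h1 : ∑ k ∈ Finset.Icc 1 K, b k • (v (k+1) - v k)
      = ∑ i ∈ Finset.range (K+1), b i • (v (i+1) - v i) := by
    rw [Finset.range_eq_Ico, Finset.sum_eq_sum_Ico_succ_bot (Nat.succ_pos K)]
    rw [hb0, zero_smul, zero_add, zero_add, Nat.succ_eq_add_one, Finset.Ico_add_one_right_eq_Icc]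
  rw [h1, ← Finset.sum_add_distrib]
  have h2 : ∀ i, (b (i+1) - b i) • v (i+1) + b i • (v (i+1) - v i)
      = b (i+1) • v (i+1) - b i • v i := by intro i; rw [sub_smul, smul_sub]; abel
  simp_rw [h2]
  rw [Finset.sum_range_sub (fun i => b i • v i), hb0, zero_smul, sub_zero]

set_option maxHeartbeats 1000000 in
/-- **Asymptotics of the gRDA drift vector (deterministic content of eq. (A.4)/(eq:eig_H1)).**
With `Φ(t,s)` close to the idempotent `P` in spectral norm (`‖Φ(t,s) - P‖ ≤ C₁ e^{-λ(t-s)} + a(t)`),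
`σ` piecewise constant with jumps at `0 = T₀ < T₁ < ⋯ < T_K`, equal to `σ̄ = σ_{K+1}` after
`T_K` and with `‖σₖ‖₂ ≤ √d`, the drift
`δ(t) = c μ ∫₀^t s^{μ-1} Φ(t,s) σ(s) ds + c ∑_{k=1}^K Φ(t,T_k)(σ_{k+1} - σ_k) T_k^μ`
satisfies `‖δ(t) - c t^μ P σ̄‖₂ ≤ C (t^{μ-1} + t^μ a(t) + e^{-λ(t - T_K)})` for all
`t ≥ max(T_K, 1) + 1`, for some constant `C > 0`. -/
theorem gRDA_drift_asymptotics
    (d : ℕ) (hd : 1 ≤ d) (mu lam c C1 : ℝ)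
    (hmu0 : 0 < mu) (hmu1 : mu < 1) (hlam : 0 < lam) (hC1 : 0 ≤ C1)
    (P : EuclideanSpace ℝ (Fin d) →L[ℝ] EuclideanSpace ℝ (Fin d))
    (hP : P * P = P)
    (a : ℝ → ℝ) (ha : ∀ t > (0:ℝ), 0 ≤ a t)
    (Φ : ℝ → ℝ → (EuclideanSpace ℝ (Fin d) →L[ℝ] EuclideanSpace ℝ (Fin d)))
    (hΦmeas : ∀ t, StronglyMeasurable fun s => Φ t s)
    (hΦ : ∀ t s : ℝ, 0 ≤ s → s ≤ t →
      ‖Φ t s - P‖ ≤ C1 * Real.exp (-(lam * (t - s))) + a t)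
    (K : ℕ) (T : ℕ → ℝ) (hT0 : T 0 = 0) (hTmono : ∀ k < K, T k < T (k + 1))
    (σv : ℕ → EuclideanSpace ℝ (Fin d)) (σ : ℝ → EuclideanSpace ℝ (Fin d))
    (hσ : ∀ k, 1 ≤ k → k ≤ K → ∀ s ∈ Set.Ioo (T (k - 1)) (T k), σ s = σv k)
    (hσtail : ∀ s : ℝ, T K < s → σ s = σv (K + 1))
    (hσbound : ∀ k, 1 ≤ k → k ≤ K + 1 → ‖σv k‖ ≤ Real.sqrt d)
    (δ : ℝ → EuclideanSpace ℝ (Fin d))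
    (hδ : ∀ t : ℝ, T K < t →
      δ t = (c * mu) • (∫ s in (0:ℝ)..t, s ^ (mu - 1) • (Φ t s) (σ s))
            + c • ∑ k ∈ Finset.Icc 1 K,
                (T k ^ mu) • (Φ t (T k)) (σv (k + 1) - σv k)) :
    ∃ C > 0, ∀ t ≥ max (T K) 1 + 1,
      ‖δ t - (c * t ^ mu) • P (σv (K + 1))‖
        ≤ C * (t ^ (mu - 1) + t ^ mu * a t + Real.exp (-(lam * (t - T K)))) := by
  classical
  have hTle : ∀ i j : ℕ, i ≤ j → j ≤ K → T i ≤ T j := by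
    intro i j hij hjK
    induction j with
    | zero => simp [Nat.le_zero.mp hij]
    | succ n ih =>
      rcases Nat.eq_or_lt_of_le hij with h | h
      · rw [h]
      · exact le_trans (ih (Nat.lt_succ_iff.mp h) (by omega)) (le_of_lt (hTmono n (by omega)))
  have hT0le : ∀ k, k ≤ K → 0 ≤ T k := fun k hk => hT0 ▸ hTle 0 k (Nat.zero_le k) hk
  have hTK0 : 0 ≤ T K := hT0le K le_rfl
  have hTKmu : 0 ≤ T K ^ mu := Real.rpow_nonneg hTK0 mu
  have hmu1' : -1 < mu - 1 := by linarith
  have hmusub : mu - 1 ≤ 0 := by linarith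
  set sd := Real.sqrt d with hsddef
  have hsd : (0:ℝ) ≤ sd := Real.sqrt_nonneg d
  set Eb : ℝ := 2 / (lam * mu) + 2 / lam with hEbdef
  have hEb0 : 0 ≤ Eb := by positivity
  set c1 := |c| * (K+1) * mu * sd * C1 * Eb with hc1def
  set c2 := |c| * (K+1) * sd + |c| * K * (2*sd) with hc2def
  set c3 := |c| * K * (2*sd) * (T K ^ mu) * C1 with hc3def
  have hc1 : 0 ≤ c1 := by positivity
  have hc2 : 0 ≤ c2 := by positivity
  have hc3 : 0 ≤ c3 := by
    have h9 : (0:ℝ) ≤ |c| * K * (2*sd) := by positivity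
    exact mul_nonneg (mul_nonneg h9 hTKmu) hC1
  refine ⟨c1 + c2 + c3 + 1, by linarith, ?_⟩
  intro t ht
  have h2t : (2:ℝ) ≤ t := by have := le_max_right (T K) 1; linarith
  have htK1 : T K + 1 ≤ t := by have := le_max_left (T K) 1; linarith
  have ht0 : (0:ℝ) < t := by linarith
  have htKlt : T K < t := by linarith
  have hat : 0 ≤ a t := ha t ht0
  -- the partition sequence
  set A : ℕ → ℝ := fun k => if k ≤ K then T k else t with hAdef
  have hA0 : A 0 = 0 := by simp [hAdef, hT0]
  have hAK : ∀ k, k ≤ K → A k = T k := fun k hk => by simp [hAdef, hk]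
  have hAtop : A (K+1) = t := by simp [hAdef]
  have hAnn : ∀ i, 0 ≤ A i := by
    intro i; by_cases h : i ≤ K
    · simpa [hAdef, h] using hT0le i h
    · simp only [hAdef, if_neg h]; linarith
  have hAt : ∀ i, A i ≤ t := by
    intro i; by_cases h : i ≤ K
    · simp only [hAdef, if_pos h]; exact le_trans (hTle i K h le_rfl) htKlt.le
    · simp [hAdef, h]
  have hAmono : ∀ i, i ≤ K → A i ≤ A (i+1) := by
    intro i hi
    rcases Nat.lt_or_ge i K with h | h
    · rw [hAK i hi, hAK (i+1) h]
      exact (hTmono i h).le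
    · have h9 : A (i+1) = t := by
        simp only [hAdef]
        rw [if_neg (by omega)]
      rw [h9, hAK i hi]
      exact le_trans (hTle i K hi le_rfl) htKlt.le
  -- σ on the open pieces
  have hσpiece : ∀ i, i ≤ K → ∀ s, s ∈ Set.Ioo (A i) (A (i+1)) → σ s = σv (i+1) := by
    intro i hi s hs
    rcases Nat.lt_or_ge i K with h | h
    · have h1 : A i = T i := hAK i hi
      have h2 : A (i+1) = T (i+1) := hAK (i+1) h
      refine hσ (i+1) (by omega) (by omega) s ?_
      have h3 : (i+1) - 1 = i := by omega
      rw [h3]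
      exact ⟨h1 ▸ hs.1, h2 ▸ hs.2⟩
    · have hiK : i = K := le_antisymm hi h
      subst hiK
      refine hσtail s ?_
      have h4 := hs.1
      rwa [hAK i le_rfl] at h4
  -- operator norm bound for Φ
  have hΦnorm : ∀ s, 0 ≤ s → s ≤ t → ‖Φ t s‖ ≤ ‖P‖ + C1 + a t := by
    intro s h0 h1
    have h2 := hΦ t s h0 h1
    have hexp : Real.exp (-(lam * (t - s))) ≤ 1 :=
      Real.exp_le_one_iff.mpr (by nlinarith [mul_nonneg hlam.le (sub_nonneg.mpr h1)])
    have h3 : ‖Φ t s‖ ≤ ‖Φ t s - P‖ + ‖P‖ := by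
      calc ‖Φ t s‖ = ‖(Φ t s - P) + P‖ := by rw [sub_add_cancel]
      _ ≤ ‖Φ t s - P‖ + ‖P‖ := norm_add_le _ _
    nlinarith [mul_le_of_le_one_right hC1 hexp]
  -- measurability / integrability for fixed vectors
  have hmeasv : ∀ v : EuclideanSpace ℝ (Fin d),
      StronglyMeasurable fun s => s ^ (mu - 1) • (Φ t s) v := by
    intro v
    have h1 : Measurable fun s : ℝ => s ^ (mu - 1) := by fun_prop
    have h2 : StronglyMeasurable fun s => (Φ t s) v :=
      (ContinuousLinearMap.apply ℝ (EuclideanSpace ℝ (Fin d))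
        v).continuous.comp_stronglyMeasurable (hΦmeas t)
    exact h1.stronglyMeasurable.smul h2
  have hintv : ∀ (v : EuclideanSpace ℝ (Fin d)) (x y : ℝ), 0 ≤ x → x ≤ y → y ≤ t →
      IntervalIntegrable (fun s => s ^ (mu - 1) • (Φ t s) v) volume x y := by
    intro v x y hx hxy hyt
    refine IntervalIntegrable.mono_fun'
      (g := fun s => s ^ (mu - 1) * ((‖P‖ + C1 + a t) * ‖v‖)) ?_ ?_ ?_
    · exact (intervalIntegral.intervalIntegrable_rpow' hmu1').mul_const _
    · exact (hmeasv v).aestronglyMeasurable.restrict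
    · rw [Set.uIoc_of_le hxy]
      filter_upwards [ae_restrict_mem measurableSet_Ioc] with s hs
      have hs0 : 0 < s := lt_of_le_of_lt hx hs.1
      have hst : s ≤ t := hs.2.trans hyt
      rw [norm_smul, Real.norm_eq_abs, abs_of_nonneg (Real.rpow_nonneg hs0.le _)]
      refine mul_le_mul_of_nonneg_left ?_ (Real.rpow_nonneg hs0.le _)
      exact le_trans ((Φ t s).le_opNorm v)
        (mul_le_mul_of_nonneg_right (hΦnorm s hs0.le hst) (norm_nonneg v))
  -- interval integrability of the σ-integrand on pieces
  have hfig : ∀ i, i ≤ K →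
      IntervalIntegrable (fun s => s ^ (mu - 1) • (Φ t s) (σ s)) volume (A i) (A (i+1)) := by
    intro i hi
    refine (hintv (σv (i+1)) (A i) (A (i+1)) (hAnn i) (hAmono i hi) (hAt (i+1))).congr_ae ?_
    have hz : (volume : Measure ℝ) {A (i+1)} = 0 := measure_singleton _
    have hnull : ∀ᵐ s : ℝ ∂(volume.restrict (Set.uIoc (A i) (A (i+1)))),
        s ∉ ({A (i+1)} : Set ℝ) :=
      ae_restrict_of_ae (measure_eq_zero_iff_ae_notMem.mp hz)
    filter_upwards [hnull, ae_restrict_mem measurableSet_uIoc] with s hs1 hs2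
    rw [Set.uIoc_of_le (hAmono i hi)] at hs2
    have hs3 : s ∈ Set.Ioo (A i) (A (i+1)) := ⟨hs2.1, lt_of_le_of_ne hs2.2 (by simpa using hs1)⟩
    simp [hσpiece i hi s hs3]
  have hIsum : (∫ s in (0:ℝ)..t, s ^ (mu - 1) • (Φ t s) (σ s))
      = ∑ i ∈ Finset.range (K+1), ∫ s in A i..A (i+1), s ^ (mu - 1) • (Φ t s) (σ s) := by
    have h := intervalIntegral.sum_integral_adjacent_intervals
      (a := A) (n := K+1) (f := fun s => s ^ (mu - 1) • (Φ t s) (σ s)) (μ := volume)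
      (fun i hi => hfig i (by omega))
    rw [hA0, hAtop] at h
    exact h.symm
  set J : ℕ → EuclideanSpace ℝ (Fin d) :=
    fun i => ∫ s in A i..A (i+1), s ^ (mu - 1) • (Φ t s) (σv (i+1)) with hJdef
  have hJcongr : ∀ i, i ≤ K →
      (∫ s in A i..A (i+1), s ^ (mu - 1) • (Φ t s) (σ s)) = J i := by
    intro i hi
    refine intervalIntegral.integral_congr_ae ?_
    have hz : (volume : Measure ℝ) {A (i+1)} = 0 := measure_singleton _
    filter_upwards [measure_eq_zero_iff_ae_notMem.mp hz] with s hs1 hs2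
    rw [Set.uIoc_of_le (hAmono i hi)] at hs2
    have hs3 : s ∈ Set.Ioo (A i) (A (i+1)) := ⟨hs2.1, lt_of_le_of_ne hs2.2 (by simpa using hs1)⟩
    rw [hσpiece i hi s hs3]
  -- the rpow integral
  have hR : ∀ x y : ℝ, (∫ s in x..y, s ^ (mu - 1)) = (y ^ mu - x ^ mu) / mu := by
    intro x y
    rw [integral_rpow (Or.inl hmu1')]
    have h9 : mu - 1 + 1 = mu := by ring
    rw [h9]
  -- the scalar bounding function
  set g1 : ℝ → ℝ := fun s => sd * (s ^ (mu - 1) * (C1 * Real.exp (-(lam * (t - s))) + a t))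
    with hg1def
  have hnegc : Continuous fun s : ℝ => -(lam * (t - s)) :=
    (continuous_const.mul (continuous_const.sub continuous_id)).neg
  have hcont : Continuous fun s : ℝ => C1 * Real.exp (-(lam * (t - s))) + a t :=
    (continuous_const.mul (Real.continuous_exp.comp hnegc)).add continuous_const
  have hg1int : ∀ x y : ℝ, IntervalIntegrable g1 volume x y := by
    intro x y
    exact ((intervalIntegral.intervalIntegrable_rpow' hmu1').mul_continuousOn
      hcont.continuousOn).const_mul sd
  have hg1nn : ∀ s : ℝ, 0 ≤ s → 0 ≤ g1 s := by
    intro s hs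
    have h9 : 0 ≤ C1 * Real.exp (-(lam * (t - s))) + a t :=
      add_nonneg (mul_nonneg hC1 (Real.exp_pos _).le) hat
    exact mul_nonneg hsd (mul_nonneg (Real.rpow_nonneg hs _) h9)
  set G := ∫ s in (0:ℝ)..t, g1 s with hGdef
  -- per-piece error bound
  have herr : ∀ i, i ≤ K →
      ‖J i - ((A (i+1) ^ mu - A i ^ mu) / mu) • P (σv (i+1))‖ ≤ G := by
    intro i hi
    have hvle : ‖σv (i+1)‖ ≤ sd := hσbound (i+1) (by omega) (by omega)
    have hPint : IntervalIntegrable (fun s => s ^ (mu - 1) • P (σv (i+1)))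
        volume (A i) (A (i+1)) :=
      ⟨(intervalIntegral.intervalIntegrable_rpow' hmu1').1.smul_const _,
       (intervalIntegral.intervalIntegrable_rpow' hmu1').2.smul_const _⟩
    have hEq : ∫ s in A i..A (i+1), s ^ (mu - 1) • ((Φ t s - P) (σv (i+1)))
        = (∫ s in A i..A (i+1), s ^ (mu - 1) • (Φ t s) (σv (i+1)))
          - ∫ s in A i..A (i+1), s ^ (mu - 1) • P (σv (i+1)) := by
      rw [← intervalIntegral.integral_sub
        (hintv _ _ _ (hAnn i) (hAmono i hi) (hAt (i+1))) hPint]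
      congr 1
      funext s
      rw [ContinuousLinearMap.sub_apply, smul_sub]
    have hsub : J i - ((A (i+1) ^ mu - A i ^ mu) / mu) • P (σv (i+1))
        = ∫ s in A i..A (i+1), s ^ (mu - 1) • ((Φ t s - P) (σv (i+1))) := by
      rw [hEq, intervalIntegral.integral_smul_const, hR (A i) (A (i+1))]
    rw [hsub]
    have h1 : ‖∫ s in A i..A (i+1), s ^ (mu - 1) • ((Φ t s - P) (σv (i+1)))‖
        ≤ |∫ s in A i..A (i+1), g1 s| := by
      refine intervalIntegral.norm_integral_le_abs_of_norm_le ?_ (hg1int _ _)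
      filter_upwards [ae_restrict_mem measurableSet_uIoc] with s hs
      rw [Set.uIoc_of_le (hAmono i hi)] at hs
      have hs0 : 0 < s := lt_of_le_of_lt (hAnn i) hs.1
      have hst : s ≤ t := hs.2.trans (hAt (i+1))
      rw [norm_smul, Real.norm_eq_abs, abs_of_nonneg (Real.rpow_nonneg hs0.le _)]
      have h2 : ‖(Φ t s - P) (σv (i+1))‖ ≤ (C1 * Real.exp (-(lam * (t - s))) + a t) * sd := by
        refine le_trans ((Φ t s - P).le_opNorm _) ?_
        exact mul_le_mul (hΦ t s hs0.le hst) hvle (norm_nonneg _)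
          (add_nonneg (mul_nonneg hC1 (Real.exp_pos _).le) hat)
      calc s ^ (mu - 1) * ‖(Φ t s - P) (σv (i+1))‖
          ≤ s ^ (mu - 1) * ((C1 * Real.exp (-(lam * (t - s))) + a t) * sd) :=
            mul_le_mul_of_nonneg_left h2 (Real.rpow_nonneg hs0.le _)
        _ = g1 s := by simp only [hg1def]; ring
    have h2 : |∫ s in A i..A (i+1), g1 s| ≤ G := by
      have hnn : 0 ≤ ∫ s in A i..A (i+1), g1 s :=
        intervalIntegral.integral_nonneg (hAmono i hi)
          (fun u hu => hg1nn u (le_trans (hAnn i) hu.1))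
      rw [abs_of_nonneg hnn, hGdef]
      refine intervalIntegral.integral_mono_interval (hAnn i) (hAmono i hi) (hAt (i+1))
        ?_ (hg1int 0 t)
      filter_upwards [ae_restrict_mem measurableSet_Ioc] with s hs using hg1nn s hs.1.le
    exact h1.trans h2
  -- value/bound of G
  set Ei := ∫ s in (0:ℝ)..t, s ^ (mu - 1) * Real.exp (-(lam * (t - s))) with hEidef
  have hexpint : ∀ x y : ℝ,
      IntervalIntegrable (fun s => s ^ (mu - 1) * Real.exp (-(lam * (t - s)))) volume x y :=
    fun x y => (intervalIntegral.intervalIntegrable_rpow' hmu1').mul_continuousOn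
      (Real.continuous_exp.comp hnegc).continuousOn
  have hGval : G = sd * C1 * Ei + sd * a t * (t ^ mu / mu) := by
    have hsplit : g1 = fun s => (sd * C1) * (s ^ (mu - 1) * Real.exp (-(lam * (t - s))))
        + (sd * a t) * s ^ (mu - 1) := by
      funext s; simp only [hg1def]; ring
    rw [hGdef, hsplit, intervalIntegral.integral_add ((hexpint 0 t).const_mul _)
      ((intervalIntegral.intervalIntegrable_rpow' hmu1').const_mul _),
      intervalIntegral.integral_const_mul, intervalIntegral.integral_const_mul, hR 0 t,
      Real.zero_rpow hmu0.ne', ← hEidef]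
    ring
  have hthalf : (0:ℝ) < t / 2 := by linarith
  have hhalf2 : 0 ≤ (t/2 : ℝ) ^ (mu - 1) := Real.rpow_nonneg hthalf.le _
  have hhalfle : (t/2 : ℝ) ^ (mu - 1) ≤ 2 * t ^ (mu - 1) := by
    have hb9 : (t/2 : ℝ) = t * (1/2) := by ring
    have h1 : (t/2 : ℝ) ^ (mu - 1) = t ^ (mu - 1) * ((1:ℝ)/2) ^ (mu - 1) := by
      rw [hb9, Real.mul_rpow ht0.le (by norm_num)]
    have h2 : ((1:ℝ)/2) ^ (mu - 1) ≤ 2 := by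
      have h3 : ((1:ℝ)/2) ^ (mu - 1) = ((2:ℝ) ^ (mu - 1))⁻¹ := by
        rw [one_div, Real.inv_rpow (by norm_num)]
      rw [h3, ← Real.rpow_neg (by norm_num)]
      calc (2:ℝ) ^ (-(mu - 1)) ≤ (2:ℝ) ^ (1:ℝ) :=
            Real.rpow_le_rpow_of_exponent_le one_le_two (by linarith)
        _ = 2 := Real.rpow_one 2
    calc (t/2 : ℝ) ^ (mu - 1) = t ^ (mu - 1) * ((1:ℝ)/2) ^ (mu - 1) := h1
      _ ≤ t ^ (mu - 1) * 2 := mul_le_mul_of_nonneg_left h2 (Real.rpow_nonneg ht0.le _)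
      _ = 2 * t ^ (mu - 1) := by ring
  have hEi : Ei ≤ Eb * t ^ (mu - 1) := by
    have hs1 : Ei = (∫ s in (0:ℝ)..(t/2), s ^ (mu - 1) * Real.exp (-(lam * (t - s))))
        + ∫ s in (t/2)..t, s ^ (mu - 1) * Real.exp (-(lam * (t - s))) := by
      rw [hEidef, ← intervalIntegral.integral_add_adjacent_intervals
        (hexpint 0 (t/2)) (hexpint (t/2) t)]
    have hlow : (∫ s in (0:ℝ)..(t/2), s ^ (mu - 1) * Real.exp (-(lam * (t - s))))
        ≤ Real.exp (-(lam * (t/2))) * ((t/2) ^ mu / mu) := by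
      have hmono : (∫ s in (0:ℝ)..(t/2), s ^ (mu - 1) * Real.exp (-(lam * (t - s))))
          ≤ ∫ s in (0:ℝ)..(t/2), s ^ (mu - 1) * Real.exp (-(lam * (t/2))) := by
        refine intervalIntegral.integral_mono_on hthalf.le (hexpint 0 (t/2))
          ((intervalIntegral.intervalIntegrable_rpow' hmu1').mul_const _) ?_
        intro s hs
        refine mul_le_mul_of_nonneg_left ?_ (Real.rpow_nonneg hs.1 _)
        refine Real.exp_le_exp.mpr ?_
        have h9 : lam * (t/2) ≤ lam * (t - s) :=
          mul_le_mul_of_nonneg_left (by linarith [hs.2]) hlam.le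
        linarith
      rw [intervalIntegral.integral_mul_const, hR 0 (t/2), Real.zero_rpow hmu0.ne'] at hmono
      exact hmono.trans (le_of_eq (by ring))
    have hup : (∫ s in (t/2)..t, s ^ (mu - 1) * Real.exp (-(lam * (t - s))))
        ≤ (t/2) ^ (mu - 1) * (1/lam) := by
      have hmono : (∫ s in (t/2)..t, s ^ (mu - 1) * Real.exp (-(lam * (t - s))))
          ≤ ∫ s in (t/2)..t, (t/2) ^ (mu - 1) * Real.exp (-(lam * (t - s))) := by
        refine intervalIntegral.integral_mono_on (by linarith) (hexpint (t/2) t)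
          (((Real.continuous_exp.comp hnegc).intervalIntegrable _ _).const_mul _) ?_
        intro s hs
        refine mul_le_mul_of_nonneg_right ?_ (Real.exp_pos _).le
        exact Real.rpow_le_rpow_of_nonpos hthalf hs.1 hmusub
      rw [intervalIntegral.integral_const_mul] at hmono
      refine hmono.trans ?_
      exact mul_le_mul_of_nonneg_left (aux_exp_integral lam t (t/2) t hlam le_rfl) hhalf2
    have hkey1 : Real.exp (-(lam * (t/2))) * ((t/2) ^ mu / mu)
        ≤ (2 / (lam * mu)) * t ^ (mu - 1) := by
      have e1 : (t/2 : ℝ) ^ mu = (t/2) ^ (mu - 1) * (t/2) := by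
        have h8 := Real.rpow_add hthalf (mu - 1) 1
        rw [Real.rpow_one] at h8
        have h9 : mu - 1 + 1 = mu := by ring
        rw [h9] at h8
        exact h8
      have e2 : (t/2) * Real.exp (-(lam * (t/2))) ≤ 1 / lam :=
        aux_x_exp lam (t/2) hlam hthalf.le
      have hnum : (t/2) ^ (mu - 1) * ((t/2) * Real.exp (-(lam * (t/2))))
          ≤ (2 * t ^ (mu - 1)) * (1/lam) :=
        mul_le_mul hhalfle e2 (mul_nonneg hthalf.le (Real.exp_pos _).le) (by positivity)
      calc Real.exp (-(lam * (t/2))) * ((t/2) ^ mu / mu)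
          = ((t/2) ^ (mu - 1) * ((t/2) * Real.exp (-(lam * (t/2))))) / mu := by rw [e1]; ring
        _ ≤ ((2 * t ^ (mu - 1)) * (1/lam)) / mu :=
            (div_le_div_iff_of_pos_right hmu0).mpr hnum
        _ = (2 / (lam * mu)) * t ^ (mu - 1) := by
            field_simp
    have hkey2 : (t/2 : ℝ) ^ (mu - 1) * (1/lam) ≤ (2/lam) * t ^ (mu - 1) := by
      calc (t/2 : ℝ) ^ (mu - 1) * (1/lam) ≤ (2 * t ^ (mu - 1)) * (1/lam) :=
            mul_le_mul_of_nonneg_right hhalfle (by positivity)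
        _ = (2/lam) * t ^ (mu - 1) := by ring
    calc Ei = _ := hs1
      _ ≤ (2 / (lam * mu)) * t ^ (mu - 1) + (2/lam) * t ^ (mu - 1) :=
          add_le_add (hlow.trans hkey1) (hup.trans hkey2)
      _ = Eb * t ^ (mu - 1) := by rw [hEbdef]; ring
  -- the jump-sum terms
  set eK := Real.exp (-(lam * (t - T K))) with heKdef
  have heK0 : (0:ℝ) < eK := Real.exp_pos _
  have hYk : ∀ k ∈ Finset.Icc 1 K,
      ‖(T k ^ mu) • ((Φ t (T k) - P) (σv (k+1) - σv k))‖
        ≤ 2 * sd * (T K ^ mu * C1 * eK + t ^ mu * a t) := by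
    intro k hk
    obtain ⟨hk1, hkK⟩ := Finset.mem_Icc.mp hk
    have hTk0 : 0 ≤ T k := hT0le k hkK
    have hTkK : T k ≤ T K := hTle k K hkK le_rfl
    have hTkt : T k ≤ t := hTkK.trans htKlt.le
    have hw : ‖σv (k+1) - σv k‖ ≤ 2 * sd := by
      have h1 := hσbound (k+1) (by omega) (by omega)
      have h2 := hσbound k hk1 (by omega)
      calc ‖σv (k+1) - σv k‖ ≤ ‖σv (k+1)‖ + ‖σv k‖ := norm_sub_le _ _
        _ ≤ 2 * sd := by rw [hsddef] at *; linarith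
    have hop : ‖(Φ t (T k) - P) (σv (k+1) - σv k)‖
        ≤ (C1 * Real.exp (-(lam * (t - T k))) + a t) * (2 * sd) := by
      refine le_trans ((Φ t (T k) - P).le_opNorm _) ?_
      exact mul_le_mul (hΦ t (T k) hTk0 hTkt) hw (norm_nonneg _)
        (add_nonneg (mul_nonneg hC1 (Real.exp_pos _).le) hat)
    have hek : Real.exp (-(lam * (t - T k))) ≤ eK := by
      rw [heKdef]
      refine Real.exp_le_exp.mpr ?_
      have h9 : lam * (t - T K) ≤ lam * (t - T k) :=
        mul_le_mul_of_nonneg_left (by linarith) hlam.le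
      linarith
    have hmuk : T k ^ mu ≤ T K ^ mu := Real.rpow_le_rpow hTk0 hTkK hmu0.le
    have hmut : T k ^ mu ≤ t ^ mu := Real.rpow_le_rpow hTk0 hTkt hmu0.le
    have hTkmu0 : 0 ≤ T k ^ mu := Real.rpow_nonneg hTk0 _
    rw [norm_smul, Real.norm_eq_abs, abs_of_nonneg hTkmu0]
    have p1 : T k ^ mu * Real.exp (-(lam * (t - T k))) ≤ T K ^ mu * eK :=
      mul_le_mul hmuk hek (Real.exp_pos _).le hTKmu
    have p2 : T k ^ mu * a t ≤ t ^ mu * a t := mul_le_mul_of_nonneg_right hmut hat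
    calc T k ^ mu * ‖(Φ t (T k) - P) (σv (k+1) - σv k)‖
        ≤ T k ^ mu * ((C1 * Real.exp (-(lam * (t - T k))) + a t) * (2 * sd)) :=
          mul_le_mul_of_nonneg_left hop hTkmu0
      _ = 2 * sd * (C1 * (T k ^ mu * Real.exp (-(lam * (t - T k)))) + T k ^ mu * a t) := by
          ring
      _ ≤ 2 * sd * (C1 * (T K ^ mu * eK) + t ^ mu * a t) := by
          refine mul_le_mul_of_nonneg_left ?_ (by positivity)
          have h9 := mul_le_mul_of_nonneg_left p1 hC1
          linarith
      _ = 2 * sd * (T K ^ mu * C1 * eK + t ^ mu * a t) := by ring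
  -- telescoping identity
  have htel' : (∑ i ∈ Finset.range (K+1), (A (i+1) ^ mu - A i ^ mu) • P (σv (i+1)))
      + ∑ k ∈ Finset.Icc 1 K, (T k ^ mu) • (P (σv (k+1)) - P (σv k))
      = (t ^ mu) • P (σv (K+1)) := by
    have h0 : (fun i => A i ^ mu) 0 = 0 := by
      simp only [hA0]
      exact Real.zero_rpow hmu0.ne'
    have h1 := aux_telescope K (fun i => A i ^ mu) (fun k => P (σv k)) h0
    rw [hAtop] at h1
    have hsum2 : ∑ k ∈ Finset.Icc 1 K, (T k ^ mu) • (P (σv (k+1)) - P (σv k))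
        = ∑ k ∈ Finset.Icc 1 K, (A k ^ mu) • (P (σv (k+1)) - P (σv k)) := by
      refine Finset.sum_congr rfl fun k hk => ?_
      rw [hAK k (Finset.mem_Icc.mp hk).2]
    rw [hsum2]
    exact h1
  -- decompose the jump sum
  have hS : ∑ k ∈ Finset.Icc 1 K, (T k ^ mu) • (Φ t (T k)) (σv (k+1) - σv k)
      = (∑ k ∈ Finset.Icc 1 K, (T k ^ mu) • ((Φ t (T k) - P) (σv (k+1) - σv k)))
        + ∑ k ∈ Finset.Icc 1 K, (T k ^ mu) • (P (σv (k+1)) - P (σv k)) := by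
    rw [← Finset.sum_add_distrib]
    refine Finset.sum_congr rfl fun k _ => ?_
    rw [← smul_add]
    congr 1
    rw [ContinuousLinearMap.sub_apply]
    simp only [map_sub]
    abel
  have hX : ∀ i, i ≤ K →
      mu • J i - (A (i+1) ^ mu - A i ^ mu) • P (σv (i+1))
        = mu • (J i - ((A (i+1) ^ mu - A i ^ mu) / mu) • P (σv (i+1))) := by
    intro i _hi
    rw [smul_sub, smul_smul, mul_comm mu, div_mul_cancel₀ _ hmu0.ne']
  -- main algebraic identity
  have hmain : δ t - (c * t ^ mu) • P (σv (K+1))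
      = c • ((∑ i ∈ Finset.range (K+1),
            (mu • J i - (A (i+1) ^ mu - A i ^ mu) • P (σv (i+1))))
          + ∑ k ∈ Finset.Icc 1 K, (T k ^ mu) • ((Φ t (T k) - P) (σv (k+1) - σv k))) := by
    rw [hδ t htKlt, hIsum,
      Finset.sum_congr rfl (fun i hi => hJcongr i (Nat.lt_succ_iff.mp (Finset.mem_range.mp hi))),
      hS]
    have hXsum : ∑ i ∈ Finset.range (K+1),
        (mu • J i - (A (i+1) ^ mu - A i ^ mu) • P (σv (i+1)))
        = mu • (∑ i ∈ Finset.range (K+1), J i)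
          - ∑ i ∈ Finset.range (K+1), (A (i+1) ^ mu - A i ^ mu) • P (σv (i+1)) := by
      rw [Finset.sum_sub_distrib, Finset.smul_sum]
    rw [hXsum]
    have hW : ∑ i ∈ Finset.range (K+1), (A (i+1) ^ mu - A i ^ mu) • P (σv (i+1))
        = (t ^ mu) • P (σv (K+1))
          - ∑ k ∈ Finset.Icc 1 K, (T k ^ mu) • (P (σv (k+1)) - P (σv k)) :=
      eq_sub_of_add_eq htel'
    rw [hW, mul_smul, mul_smul, ← smul_add, ← smul_sub]
    congr 1
    abel
  rw [hmain, norm_smul, Real.norm_eq_abs]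
  -- norm bounds for the two sums
  have hXb : ‖∑ i ∈ Finset.range (K+1),
      (mu • J i - (A (i+1) ^ mu - A i ^ mu) • P (σv (i+1)))‖ ≤ (K+1 : ℝ) * (mu * G) := by
    refine le_trans (norm_sum_le _ _) ?_
    have hterm : ∀ i ∈ Finset.range (K+1),
        ‖mu • J i - (A (i+1) ^ mu - A i ^ mu) • P (σv (i+1))‖ ≤ mu * G := by
      intro i hi
      have hiK : i ≤ K := Nat.lt_succ_iff.mp (Finset.mem_range.mp hi)
      rw [hX i hiK, norm_smul, Real.norm_eq_abs, abs_of_nonneg hmu0.le]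
      exact mul_le_mul_of_nonneg_left (herr i hiK) hmu0.le
    refine le_trans (Finset.sum_le_sum hterm) ?_
    apply le_of_eq
    rw [Finset.sum_const, Finset.card_range, nsmul_eq_mul]
    push_cast
    ring
  have hYb : ‖∑ k ∈ Finset.Icc 1 K, (T k ^ mu) • ((Φ t (T k) - P) (σv (k+1) - σv k))‖
      ≤ (K : ℝ) * (2 * sd * (T K ^ mu * C1 * eK + t ^ mu * a t)) := by
    refine le_trans (norm_sum_le _ _) ?_
    refine le_trans (Finset.sum_le_sum hYk) ?_
    apply le_of_eq
    rw [Finset.sum_const, Nat.card_Icc, nsmul_eq_mul]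
    norm_num
  have htmu1 : 0 ≤ t ^ (mu - 1) := Real.rpow_nonneg ht0.le _
  have htmu : 0 ≤ t ^ mu := Real.rpow_nonneg ht0.le _
  have hGnn : 0 ≤ G := by
    rw [hGdef]
    exact intervalIntegral.integral_nonneg ht0.le (fun u hu => hg1nn u hu.1)
  have hGle : G ≤ sd * C1 * (Eb * t ^ (mu - 1)) + sd * a t * (t ^ mu / mu) := by
    rw [hGval]
    have h9 := mul_le_mul_of_nonneg_left hEi (mul_nonneg hsd hC1)
    exact add_le_add_left h9 _
  have hmuG : mu * G ≤ mu * (sd * C1 * (Eb * t ^ (mu - 1))) + sd * a t * t ^ mu := by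
    have h := mul_le_mul_of_nonneg_left hGle hmu0.le
    have hc9 : mu * (sd * a t * (t ^ mu / mu)) = sd * a t * t ^ mu := by
      field_simp
    rw [mul_add, hc9] at h
    exact h
  have hnorm_le : ‖(∑ i ∈ Finset.range (K+1),
        (mu • J i - (A (i+1) ^ mu - A i ^ mu) • P (σv (i+1))))
      + ∑ k ∈ Finset.Icc 1 K, (T k ^ mu) • ((Φ t (T k) - P) (σv (k+1) - σv k))‖
      ≤ (K+1 : ℝ) * (mu * G) + (K : ℝ) * (2 * sd * (T K ^ mu * C1 * eK + t ^ mu * a t)) :=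
    le_trans (norm_add_le _ _) (add_le_add hXb hYb)
  have hstep : |c| * ((K+1 : ℝ) * (mu * G)
        + (K : ℝ) * (2 * sd * (T K ^ mu * C1 * eK + t ^ mu * a t)))
      ≤ c1 * t ^ (mu - 1) + c2 * (t ^ mu * a t) + c3 * eK := by
    have h2 : (|c| * ((K:ℝ)+1)) * (mu * G)
        ≤ (|c| * ((K:ℝ)+1)) * (mu * (sd * C1 * (Eb * t ^ (mu - 1))) + sd * a t * t ^ mu) :=
      mul_le_mul_of_nonneg_left hmuG (by positivity)
    have h3 : |c| * ((K+1 : ℝ) * (mu * G)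
          + (K : ℝ) * (2 * sd * (T K ^ mu * C1 * eK + t ^ mu * a t)))
        = (|c| * ((K:ℝ)+1)) * (mu * G)
          + |c| * (K:ℝ) * (2 * sd * (T K ^ mu * C1 * eK + t ^ mu * a t)) := by ring
    have h4 : (|c| * ((K:ℝ)+1)) * (mu * (sd * C1 * (Eb * t ^ (mu - 1))) + sd * a t * t ^ mu)
          + |c| * (K:ℝ) * (2 * sd * (T K ^ mu * C1 * eK + t ^ mu * a t))
        = c1 * t ^ (mu - 1) + c2 * (t ^ mu * a t) + c3 * eK := by
      rw [hc1def, hc2def, hc3def]; ring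
    rw [h3, ← h4]
    exact add_le_add_left h2 _
  calc |c| * ‖(∑ i ∈ Finset.range (K+1),
        (mu • J i - (A (i+1) ^ mu - A i ^ mu) • P (σv (i+1))))
      + ∑ k ∈ Finset.Icc 1 K, (T k ^ mu) • ((Φ t (T k) - P) (σv (k+1) - σv k))‖
      ≤ |c| * ((K+1 : ℝ) * (mu * G)
        + (K : ℝ) * (2 * sd * (T K ^ mu * C1 * eK + t ^ mu * a t))) :=
        mul_le_mul_of_nonneg_left hnorm_le (abs_nonneg c)
    _ ≤ c1 * t ^ (mu - 1) + c2 * (t ^ mu * a t) + c3 * eK := hstep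
    _ ≤ (c1 + c2 + c3 + 1) * (t ^ (mu - 1) + t ^ mu * a t + eK) := by
        have e1 : c1 * t ^ (mu - 1) ≤ (c1 + c2 + c3 + 1) * t ^ (mu - 1) :=
          mul_le_mul_of_nonneg_right (by linarith) htmu1
        have e2 : c2 * (t ^ mu * a t) ≤ (c1 + c2 + c3 + 1) * (t ^ mu * a t) :=
          mul_le_mul_of_nonneg_right (by linarith) (mul_nonneg htmu hat)
        have e3 : c3 * eK ≤ (c1 + c2 + c3 + 1) * eK :=
          mul_le_mul_of_nonneg_right (by linarith) heK0.le
        have e4 : (c1 + c2 + c3 + 1) * (t ^ (mu - 1) + t ^ mu * a t + eK)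
            = (c1 + c2 + c3 + 1) * t ^ (mu - 1) + (c1 + c2 + c3 + 1) * (t ^ mu * a t)
              + (c1 + c2 + c3 + 1) * eK := by ring
        linarith
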